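/- Classification of minimal strong extensions: let B ⊆ A be finite-dimensional subspaces of V such that A is a minimal strong extension of B. Then δ(A/B) ∈ {0, 1}, and if dim(A/B) ≥ 2 then δ(A/B) = 0. -/

import Mathlib

/-!
Common notions: for a subspace `A` of an ambient `K`-vector space `M`, `wedge2 K A` is the
image of the exterior square `⋀² A` inside the exterior algebra of `M` (the span of the
products `a ∧ b` for `a, b ∈ A`).  For subspaces `C`, `B`, `fdim K C B` (resp. `cdim K C B`)
is the dimension of `B` over `C`, i.e. of the quotient `B / (C ∩ B)`, as a natural number
(resp. as a cardinal), and `FinOver K C B` says that `B` is finite-dimensional over `C`.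
Relative to a fixed subspace `N` of `⋀² M`, writing `N(X) := N ⊓ wedge2 K X`,
`pdim K N C B` is the relative predimension `δ(B/C) = dim(B/C) - dim(N(B)/N(C))` and
`pdim0 K N A = δ(A) = dim A - dim N(A)`.  `Strong K N B A` says that `B` is strong
(self-sufficient) in `A`:  `δ(C/B) ≥ 0` (stated in the equivalent subtraction-free form
`dim(N(C)/N(B)) ≤ dim(C/B)`) for every intermediate subspace `C` finite-dimensional over
`B`; `MinStrong K N B A` says that `A` is a minimal strong extension of `B`.
-/

noncomputable section

universe u v

variable (K : Type u) [Field K] {M : Type v} [AddCommGroup M] [Module K M]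

/-- The image of the exterior square `⋀² A` of a subspace `A` inside the exterior algebra
of the ambient space. -/
def wedge2 (A : Submodule K M) : Submodule K (ExteriorAlgebra K M) :=
  Submodule.span K
    {z | ∃ a ∈ A, ∃ b ∈ A, z = ExteriorAlgebra.ι K a * ExteriorAlgebra.ι K b}

/-- The relative dimension `dim (B / C)`, as a natural number. -/
def fdim (C B : Submodule K M) : ℕ :=
  Module.finrank K (↥B ⧸ Submodule.comap B.subtype C)

/-- The relative dimension `dim (B / C)`, as a cardinal. -/
def cdim (C B : Submodule K M) : Cardinal :=
  Module.rank K (↥B ⧸ Submodule.comap B.subtype C)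

/-- `B` is finite-dimensional over `C`. -/
def FinOver (C B : Submodule K M) : Prop :=
  Module.Finite K (↥B ⧸ Submodule.comap B.subtype C)

/-- The relative predimension `δ(B/C) = dim(B/C) - dim(N(B)/N(C))` with respect to `N`. -/
def pdim (N : Submodule K (ExteriorAlgebra K M)) (C B : Submodule K M) : ℤ :=
  (fdim K C B : ℤ) - (fdim K (N ⊓ wedge2 K C) (N ⊓ wedge2 K B) : ℤ)

/-- The predimension `δ(A) = dim A - dim N(A)` with respect to `N`. -/
def pdim0 (N : Submodule K (ExteriorAlgebra K M)) (A : Submodule K M) : ℤ :=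
  (Module.finrank K ↥A : ℤ) - (Module.finrank K ↥(N ⊓ wedge2 K A) : ℤ)

/-- `B` is strong (self-sufficient) in `A` with respect to `N`. -/
def Strong (N : Submodule K (ExteriorAlgebra K M)) (B A : Submodule K M) : Prop :=
  B ≤ A ∧ ∀ C : Submodule K M, B ≤ C → C ≤ A → FinOver K B C →
    cdim K (N ⊓ wedge2 K B) (N ⊓ wedge2 K C) ≤ Cardinal.lift.{u} (cdim K B C)

/-- `A` is a minimal strong extension of `B` with respect to `N`. -/
def MinStrong (N : Submodule K (ExteriorAlgebra K M)) (B A : Submodule K M) : Prop :=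
  Strong K N B A ∧ B < A ∧ ∀ C : Submodule K M, B < C → C < A → ¬ Strong K N C A




open Module

lemma wedge2_mono {A B : Submodule K M} (h : A ≤ B) : wedge2 K A ≤ wedge2 K B := by
  apply Submodule.span_mono
  rintro z ⟨a, ha, b, hb, hz⟩
  exact ⟨a, h ha, b, h hb, hz⟩

lemma wedge2_fd (A : Submodule K M) [FiniteDimensional K A] :
    FiniteDimensional K (wedge2 K A) := by
  let f : ↥A →ₗ[K] ↥A →ₗ[K] ExteriorAlgebra K M :=
    { toFun := fun a =>
        { toFun := fun b => ExteriorAlgebra.ι K (a : M) * ExteriorAlgebra.ι K (b : M)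
          map_add' := by intro x y; simp [mul_add]
          map_smul' := by intro c x; simp [mul_smul_comm] }
      map_add' := by intro x y; ext b; simp [add_mul]
      map_smul' := by intro c x; ext b; simp [smul_mul_assoc] }
  have hle : wedge2 K A ≤ LinearMap.range (TensorProduct.lift f) := by
    rw [wedge2, Submodule.span_le]
    rintro z ⟨a, ha, b, hb, rfl⟩
    exact ⟨(⟨a, ha⟩ : ↥A) ⊗ₜ[K] (⟨b, hb⟩ : ↥A), by simp [f]⟩
  exact Submodule.finiteDimensional_of_le hle

lemma fdim_add_eq {C B : Submodule K M} (h : C ≤ B) [FiniteDimensional K B] :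
    fdim K C B + finrank K C = finrank K B := by
  have h1 := Submodule.finrank_quotient_add_finrank (Submodule.comap B.subtype C)
  rwa [LinearEquiv.finrank_eq (Submodule.comapSubtypeEquivOfLe h)] at h1

lemma cdim_eq_fdim (C B : Submodule K M) [FiniteDimensional K B] :
    cdim K C B = (fdim K C B : Cardinal) := by
  unfold cdim fdim
  exact (Module.finrank_eq_rank K _).symm

lemma finOver_of (C B : Submodule K M) [FiniteDimensional K B] : FinOver K C B := by
  unfold FinOver; infer_instance

variable (N : Submodule K (ExteriorAlgebra K M))

lemma pdim_nonneg {B C A : Submodule K M} [FiniteDimensional K A]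
    (hs : Strong K N B A) (hBC : B ≤ C) (hCA : C ≤ A) : 0 ≤ pdim K N B C := by
  haveI : FiniteDimensional K C := Submodule.finiteDimensional_of_le hCA
  haveI := wedge2_fd K C
  haveI : FiniteDimensional K ↥(N ⊓ wedge2 K C) :=
    Submodule.finiteDimensional_of_le inf_le_right
  have h := hs.2 C hBC hCA (finOver_of K B C)
  rw [cdim_eq_fdim, cdim_eq_fdim, Cardinal.lift_natCast, Nat.cast_le] at h
  unfold pdim
  omega

lemma strong_of_pdim {B A : Submodule K M} [FiniteDimensional K A] (hBA : B ≤ A)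
    (h : ∀ C : Submodule K M, B ≤ C → C ≤ A → 0 ≤ pdim K N B C) : Strong K N B A := by
  refine ⟨hBA, fun C hBC hCA _ => ?_⟩
  haveI : FiniteDimensional K C := Submodule.finiteDimensional_of_le hCA
  haveI := wedge2_fd K C
  haveI : FiniteDimensional K ↥(N ⊓ wedge2 K C) :=
    Submodule.finiteDimensional_of_le inf_le_right
  rw [cdim_eq_fdim, cdim_eq_fdim, Cardinal.lift_natCast, Nat.cast_le]
  have h2 := h C hBC hCA
  unfold pdim at h2
  omega

lemma fdim_tower {B C D : Submodule K M} (hBC : B ≤ C) (hCD : C ≤ D)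
    [FiniteDimensional K D] : fdim K B D = fdim K B C + fdim K C D := by
  haveI : FiniteDimensional K C := Submodule.finiteDimensional_of_le hCD
  have h1 := fdim_add_eq K hBC
  have h2 := fdim_add_eq K hCD
  have h3 := fdim_add_eq K (hBC.trans hCD)
  omega

lemma pdim_add {B C D : Submodule K M} (hBC : B ≤ C) (hCD : C ≤ D)
    [FiniteDimensional K D] : pdim K N B D = pdim K N B C + pdim K N C D := by
  haveI := wedge2_fd K D
  haveI : FiniteDimensional K ↥(N ⊓ wedge2 K D) :=
    Submodule.finiteDimensional_of_le inf_le_right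
  have h1 := fdim_tower K hBC hCD
  have h2 := fdim_tower K (inf_le_inf_left N (wedge2_mono K hBC))
    (inf_le_inf_left N (wedge2_mono K hCD))
  unfold pdim
  omega

lemma pdim_le_fdim (B C : Submodule K M) : pdim K N B C ≤ (fdim K B C : ℤ) := by
  unfold pdim; omega

/-- classification of minimal strong extensions: if `A` is a minimal strong
extension of `B`, then `δ(A/B) ∈ {0, 1}`, and if `dim(A/B) ≥ 2` then `δ(A/B) = 0`. -/
theorem statement12 {K : Type u} [Field K] {M : Type v} [AddCommGroup M] [Module K M]
    (N : Submodule K (ExteriorAlgebra K M)) (hN : N ≤ wedge2 K (⊤ : Submodule K M))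
    (B A : Submodule K M) [FiniteDimensional K ↥A] (hBA : B ≤ A)
    (hmin : MinStrong K N B A) :
    (pdim K N B A = 0 ∨ pdim K N B A = 1) ∧ (2 ≤ fdim K B A → pdim K N B A = 0) := by
  obtain ⟨hs, hlt, hm⟩ := hmin
  haveI : FiniteDimensional K B := Submodule.finiteDimensional_of_le hBA
  have h0 : 0 ≤ pdim K N B A := pdim_nonneg K N hs hBA le_rfl
  have hfr : Module.finrank K B < Module.finrank K A :=
    Submodule.finrank_lt_finrank_of_lt hlt
  have hd := fdim_add_eq K hBA
  have hd1 : 1 ≤ fdim K B A := by omega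
  have hple := pdim_le_fdim K N B A
  have key : 2 ≤ fdim K B A → pdim K N B A = 0 := by
    intro h2
    by_contra hne
    have hδ : 1 ≤ pdim K N B A := by omega
    have claim : ∀ D : Submodule K M, B < D → D ≤ A → 1 ≤ pdim K N B D := by
      intro D hBD hDA
      by_contra hc
      push_neg at hc
      rcases eq_or_lt_of_le hDA with rfl | hDA'
      · omega
      · refine hm D hBD hDA' (strong_of_pdim K N hDA (fun E hDE hEA => ?_))
        haveI : FiniteDimensional K E := Submodule.finiteDimensional_of_le hEA
        have hadd := pdim_add K N hBD.le hDE
        have h1 := pdim_nonneg K N hs (hBD.le.trans hDE) hEA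
        omega
    obtain ⟨a, haA, haB⟩ := SetLike.exists_of_lt hlt
    set C := B ⊔ Submodule.span K {a} with hC
    have haC : a ∈ C := Submodule.mem_sup_right (Submodule.mem_span_singleton_self a)
    have hBC : B < C := lt_of_le_of_ne le_sup_left (fun h => haB (h ▸ haC))
    have hCA : C ≤ A := sup_le hBA ((Submodule.span_singleton_le_iff_mem a A).2 haA)
    have ha0 : a ≠ 0 := fun h => haB (h ▸ B.zero_mem)
    have hfC : fdim K B C ≤ 1 := by
      haveI : FiniteDimensional K C := Submodule.finiteDimensional_of_le hCA
      have h1 := fdim_add_eq K hBC.le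
      have h2 : Module.finrank K C ≤
          Module.finrank K B + Module.finrank K (Submodule.span K {a}) :=
        Submodule.finrank_add_le_finrank_add_finrank B _
      rw [finrank_span_singleton ha0] at h2
      omega
    clear_value C
    have hCA' : C < A := by
      rcases eq_or_lt_of_le hCA with h | h
      · rw [← h] at h2; omega
      · exact h
    refine hm C hBC hCA' (strong_of_pdim K N hCA (fun E hCE hEA => ?_))
    haveI : FiniteDimensional K E := Submodule.finiteDimensional_of_le hEA
    have hadd := pdim_add K N hBC.le hCE
    have h1 := claim E (lt_of_lt_of_le hBC hCE) hEA
    have hpc := pdim_le_fdim K N B C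
    omega
  by_cases h2 : 2 ≤ fdim K B A
  · exact ⟨Or.inl (key h2), fun _ => key h2⟩
  · have hn1 : fdim K B A = 1 := by omega
    rw [hn1] at hple
    exact ⟨by omega, fun h => by omega⟩


end
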